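/- arXiv:1204.3108 — 4 statements merged into one kernel-verified Lean document; each statement's English description precedes it below -/
import Mathlib

section
/- If F is a filter on ℕ which, viewed as a subset of Cantor space 2^ℕ, is analytic, and f : ℕ → ℕ is a function such that the pushforward f_*(F) = {A ⊆ ℕ : f⁻¹[A] ∈ F} is an ultrafilter, then f_*(F) is a principal ultrafilter. -/
open Classical in
/-- The identification of subsets of ℕ with points of Cantor space. -/
noncomputable def chi (A : Set ℕ) : ℕ → Bool := fun n => if n ∈ A then true else false

open MeasureTheory Topology Set Filter

lemma chi_image (F : Filter ℕ) :
    chi '' F.sets = {x : ℕ → Bool | {n | x n = true} ∈ F} := by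
  ext x
  constructor
  · rintro ⟨A, hA, rfl⟩
    have h : {n | chi A n = true} = A := by
      ext n; simp [chi]
    simpa [h] using hA
  · intro hx
    refine ⟨{n | x n = true}, hx, ?_⟩
    funext n
    simp only [chi, Set.mem_setOf_eq]
    rcases Bool.dichotomy (x n) with h | h <;> simp [h]

/-- countable unions of meagre sets are meagre. -/
lemma isMeagre_iUnion' {X : Type*} [TopologicalSpace X] {ι : Sort*} [Countable ι]
    {s : ι → Set X} (hs : ∀ i, IsMeagre (s i)) : IsMeagre (⋃ i, s i) := by
  rw [IsMeagre, compl_iUnion]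
  exact (countable_iInter_mem).mpr hs

lemma xor_cont (w : ℕ → Bool) :
    Continuous (fun x : ℕ → Bool => fun n => xor (x n) (w n)) := by
  refine continuous_pi fun i => ?_
  have h : Continuous (fun b : Bool => xor b (w i)) := continuous_of_discreteTopology
  exact h.comp (continuous_apply i)

/-- Coordinatewise xor with a fixed vector, as a homeomorphism of Cantor space. -/
def xorHomeo (w : ℕ → Bool) : (ℕ → Bool) ≃ₜ (ℕ → Bool) where
  toFun x n := xor (x n) (w n)
  invFun x n := xor (x n) (w n)
  left_inv x := by funext n; simp [Bool.xor_assoc]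
  right_inv x := by funext n; simp [Bool.xor_assoc]
  continuous_toFun := xor_cont w
  continuous_invFun := xor_cont w

lemma xorHomeo_apply (w x : ℕ → Bool) (n : ℕ) : (xorHomeo w) x n = xor (x n) (w n) := rfl

lemma xorHomeo_invol (w x : ℕ → Bool) : (xorHomeo w) ((xorHomeo w) x) = x := by
  funext n
  simp [xorHomeo_apply, Bool.xor_assoc]

theorem analytic_pushforward_ultrafilter_principal
    (F : Filter ℕ) (hF : MeasureTheory.AnalyticSet (chi '' F.sets))
    (f : ℕ → ℕ) (U : Ultrafilter ℕ)
    (hU : (U : Filter ℕ) = F.map f) :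
    ∃ n : ℕ, U = pure n := by
  by_contra hcon
  push_neg at hcon
  have hcof : (U : Filter ℕ) ≤ Filter.cofinite :=
    U.le_cofinite_or_eq_pure.resolve_right (by simpa using hcon)
  set S : Set (ℕ → Bool) := {x | {n | x n = true} ∈ (U : Filter ℕ)} with hSdef
  -- S is analytic
  have hg : Continuous (fun x : ℕ → Bool => x ∘ f) :=
    continuous_pi fun i => continuous_apply (f i)
  have hSeq : S = (fun x : ℕ → Bool => x ∘ f) ⁻¹' (chi '' F.sets) := by
    rw [chi_image F]
    ext x
    simp only [hSdef, Set.mem_preimage, Set.mem_setOf_eq, hU, Filter.mem_map, Function.comp]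
    rfl
  have : PolishSpace (ℕ → Bool) := instPolishSpaceOfSeparableSpaceOfIsCompletelyMetrizableSpace
  have hSan : AnalyticSet S := hSeq ▸ hF.preimage hg
  -- complement of S via the flip homeomorphism
  set flipm : (ℕ → Bool) → (ℕ → Bool) := ⇑(xorHomeo fun _ => true) with hflipm
  have hcompl : Sᶜ = flipm ⁻¹' S := by
    ext x
    simp only [Set.mem_compl_iff, Set.mem_preimage, hSdef, Set.mem_setOf_eq]
    have hset : {n | flipm x n = true} = {n | x n = true}ᶜ := by
      ext n
      simp [hflipm, xorHomeo_apply]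
    rw [hset, Ultrafilter.mem_coe, Ultrafilter.mem_coe,
      Ultrafilter.compl_mem_iff_notMem]
  have hSc_an : AnalyticSet Sᶜ :=
    hcompl ▸ hSan.preimage (xorHomeo fun _ => true).continuous
  have hSmeas : MeasurableSet S := hSan.measurableSet_of_compl hSc_an
  have hSbm : BaireMeasurableSet S := hSmeas.baireMeasurableSet
  obtain ⟨O, hOopen, hSO⟩ := hSbm.residualEq_isOpen
  have hD : {x : ℕ → Bool | x ∈ S ↔ x ∈ O} ∈ residual _ :=
    Filter.eventuallyEq_set.mp hSO
  -- invariance of S under finite modifications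
  have mono : ∀ x y : ℕ → Bool, {i | x i ≠ y i}.Finite → x ∈ S → y ∈ S := by
    intro x y hxy hx
    simp only [hSdef, Set.mem_setOf_eq] at hx ⊢
    have h1 : {i | x i ≠ y i}ᶜ ∈ (U : Filter ℕ) := hcof hxy.compl_mem_cofinite
    refine Filter.mem_of_superset (Filter.inter_mem hx h1) ?_
    rintro n ⟨hn1, hn2⟩
    simp only [Set.mem_compl_iff, Set.mem_setOf_eq, not_not] at hn2
    simp only [Set.mem_setOf_eq] at hn1 ⊢
    rw [← hn2]; exact hn1
  have inv : ∀ x y : ℕ → Bool, {i | x i ≠ y i}.Finite → (x ∈ S ↔ y ∈ S) := by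
    intro x y hxy
    refine ⟨mono x y hxy, mono y x (hxy.subset fun i hi => ?_)⟩
    simpa [ne_comm] using hi
  -- S meagre leads to a contradiction
  have claim : IsMeagre S → False := by
    intro h
    have h2 : IsMeagre Sᶜ := by
      rw [hcompl]
      exact h.preimage_of_isOpenMap (xorHomeo fun _ => true).continuous
        (xorHomeo fun _ => true).isOpenMap
    have hempty : (∅ : Set (ℕ → Bool)) ∈ residual _ := by
      have hs1 : Sᶜ ∈ residual _ := h
      have hs2 : S ∈ residual _ := by simpa [IsMeagre, compl_compl] using h2
      have := Filter.inter_mem hs2 hs1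
      simpa using this
    have hdense : Dense (∅ : Set (ℕ → Bool)) := dense_of_mem_residual hempty
    simpa using hdense.nonempty
  have claim' : IsMeagre Sᶜ → False := by
    intro h
    apply claim
    have hS' : S = flipm ⁻¹' Sᶜ := by
      ext x
      show x ∈ S ↔ flipm x ∈ Sᶜ
      rw [hcompl]
      show x ∈ S ↔ flipm (flipm x) ∈ S
      rw [show flipm (flipm x) = x from xorHomeo_invol _ x]
    rw [hS']
    exact h.preimage_of_isOpenMap (xorHomeo fun _ => true).continuous
      (xorHomeo fun _ => true).isOpenMap
  -- case analysis on O
  by_cases hOne : O.Nonempty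
  · -- S is comeagre in some cylinder; transfer to all cylinders, conclude Sᶜ meagre
    obtain ⟨z, hz⟩ := hOne
    obtain ⟨v, ⟨w, n, rfl⟩, hzv, hvO⟩ :=
      (PiNat.isTopologicalBasis_cylinders (fun _ : ℕ => Bool)).exists_subset_of_mem_open hz hOopen
    have hCw : IsMeagre (PiNat.cylinder w n \ S) := by
      have hsub : PiNat.cylinder w n \ S ⊆ {x : ℕ → Bool | x ∈ S ↔ x ∈ O}ᶜ := by
        rintro x ⟨hx1, hx2⟩
        simp only [Set.mem_compl_iff, Set.mem_setOf_eq]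
        intro hiff
        exact hx2 (hiff.mpr (hvO hx1))
      exact IsMeagre.mono hsub (by rwa [IsMeagre, compl_compl])
    -- for each σ : Fin n → Bool, the σ-cylinder minus S is meagre
    set ext' : (Fin n → Bool) → (ℕ → Bool) :=
      fun σ i => if h : i < n then σ ⟨i, h⟩ else false with hext'
    have hmeag : ∀ σ : Fin n → Bool, IsMeagre (PiNat.cylinder (ext' σ) n \ S) := by
      intro σ
      set wv : ℕ → Bool := fun i => if i < n then xor (ext' σ i) (w i) else false with hwv
      have hsub : PiNat.cylinder (ext' σ) n \ S ⊆
          (xorHomeo wv) ⁻¹' (PiNat.cylinder w n \ S) := by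
        rintro x ⟨hx1, hx2⟩
        have hfin : {i | ((xorHomeo wv) x) i ≠ x i}.Finite := by
          apply Set.Finite.subset (Set.finite_Iio n)
          intro i hi
          simp only [Set.mem_setOf_eq, xorHomeo_apply] at hi
          by_contra hlt
          simp only [Set.mem_Iio, not_lt] at hlt
          apply hi
          simp [hwv, Nat.not_lt.mpr hlt]
        constructor
        · intro i hi
          have hxi : x i = ext' σ i := hx1 i hi
          rw [xorHomeo_apply, hxi]
          simp only [hwv, if_pos hi]
          cases ext' σ i <;> cases w i <;> rfl
        · intro hmem
          exact hx2 ((inv _ _ hfin).mp hmem)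
      refine IsMeagre.mono hsub ?_
      exact hCw.preimage_of_isOpenMap (xorHomeo wv).continuous (xorHomeo wv).isOpenMap
    have hcover : Sᶜ ⊆ ⋃ σ : Fin n → Bool, (PiNat.cylinder (ext' σ) n \ S) := by
      intro x hx
      refine Set.mem_iUnion.mpr ⟨fun i => x i, ?_, hx⟩
      intro i hi
      simp [hext', hi]
    exact claim' (IsMeagre.mono hcover (isMeagre_iUnion' hmeag))
  · -- O is empty, so S is meagre
    rw [Set.not_nonempty_iff_eq_empty] at hOne
    subst hOne
    apply claim
    have hsub : {x : ℕ → Bool | x ∈ S ↔ x ∈ (∅ : Set (ℕ → Bool))} ⊆ Sᶜ := by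
      intro x hx
      simp only [Set.mem_setOf_eq, Set.mem_empty_iff_false, iff_false] at hx
      exact hx
    exact Filter.mem_of_superset hD hsub
end

section
/- If F is an analytic filter on ℕ (as a subset of Cantor space), then F is not Rudin–Keisler above any nonprincipal ultrafilter; that is, there is no function f : ℕ → ℕ and nonprincipal ultrafilter U on ℕ such that U = {A ⊆ ℕ : f⁻¹[A] ∈ F}. -/
open MeasureTheory Filter Set Topology

open Classical in
noncomputable def flp (S : Set ℕ) (x : ℕ → Bool) : ℕ → Bool :=
  fun n => if n ∈ S then !x n else x n

lemma flp_flp (S : Set ℕ) (x : ℕ → Bool) : flp S (flp S x) = x := by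
  funext n; by_cases h : n ∈ S <;> simp [flp, h]

lemma flp_continuous (S : Set ℕ) : Continuous (flp S) := by
  refine continuous_pi fun n => ?_
  by_cases h : n ∈ S
  · simpa [flp, h, Function.comp_def] using (continuous_of_discreteTopology (f := fun b : Bool => !b)).comp
      (continuous_apply n)
  · simpa [flp, h] using continuous_apply n

noncomputable def flpHomeo (S : Set ℕ) : Homeomorph (ℕ → Bool) (ℕ → Bool) where
  toFun := flp S
  invFun := flp S
  left_inv := flp_flp S
  right_inv := flp_flp S
  continuous_toFun := flp_continuous S
  continuous_invFun := flp_continuous S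

lemma flp_meagre {S : Set ℕ} {s : Set (ℕ → Bool)} (h : IsMeagre s) :
    IsMeagre (flp S ⁻¹' s) :=
  h.preimage_of_isOpenMap (flp_continuous S) (flpHomeo S).isOpenMap

lemma chi_setOf (x : ℕ → Bool) : chi {n | x n = true} = x := by
  funext n; by_cases h : x n = true <;> simp [chi, h, Bool.eq_false_iff, Ne, h]

lemma mem_chi_image {G : Filter ℕ} {x : ℕ → Bool} :
    x ∈ chi '' G.sets ↔ {n | x n = true} ∈ G := by
  constructor
  · rintro ⟨A, hA, rfl⟩
    have : {n | chi A n = true} = A := by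
      ext n; by_cases h : n ∈ A <;> simp [chi, h]
    rwa [this]
  · intro h
    exact ⟨{n | x n = true}, h, chi_setOf x⟩

lemma setOf_flp (S : Set ℕ) (x : ℕ → Bool) :
    {n | flp S x n = true} = symmDiff {n | x n = true} S := by
  ext n
  by_cases h : n ∈ S <;> by_cases h' : x n = true <;>
    simp [flp, h, h', Set.mem_symmDiff]

instance polishSpace_nat_bool : PolishSpace (ℕ → Bool) := by
  have : TopologicalSpace.IsCompletelyMetrizableSpace (ℕ → Bool) := inferInstance
  infer_instance

theorem analytic_filter_not_RK_above_nonprincipal_ultrafilter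
    (F : Filter ℕ) (hF : MeasureTheory.AnalyticSet (chi '' F.sets)) :
    ¬ ∃ (f : ℕ → ℕ) (U : Ultrafilter ℕ),
        (U : Filter ℕ) ≤ Filter.cofinite ∧ (U : Filter ℕ) = F.map f := by
  rintro ⟨f, U, hcof, hUF⟩
  set T : Set (ℕ → Bool) := chi '' (U : Filter ℕ).sets with hTdef
  have memT : ∀ x : ℕ → Bool, x ∈ T ↔ {n | x n = true} ∈ U := fun x => mem_chi_image
  -- T is analytic
  have hσ : Continuous (fun x : ℕ → Bool => x ∘ f) :=
    continuous_pi fun n => continuous_apply (f n)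
  have hT_eq : T = (fun x : ℕ → Bool => x ∘ f) ⁻¹' (chi '' F.sets) := by
    ext x
    rw [memT, Set.mem_preimage, mem_chi_image, ← Ultrafilter.mem_coe, hUF, Filter.mem_map]
    rfl
  have hT : AnalyticSet T := hT_eq ▸ hF.preimage hσ
  -- finite flips preserve T
  have hfin : ∀ S : Set ℕ, S.Finite → flp S ⁻¹' T = T := by
    intro S hS
    ext x
    rw [Set.mem_preimage, memT, memT, setOf_flp]
    set A := {n | x n = true}
    have hSc : Sᶜ ∈ U := hcof hS.compl_mem_cofinite
    have key : ∀ B : Set ℕ, B ∈ U ↔ B ∩ Sᶜ ∈ U := fun B =>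
      ⟨fun hB => Filter.inter_mem hB hSc, fun hB => Filter.mem_of_superset hB inter_subset_left⟩
    have : symmDiff A S ∩ Sᶜ = A ∩ Sᶜ := by
      ext n; simp [Set.mem_symmDiff]; tauto
    rw [key (symmDiff A S), key A, this]
  -- full flip maps T to Tᶜ
  have hneg : flp Set.univ ⁻¹' T = Tᶜ := by
    ext x
    have huniv : symmDiff {n | x n = true} (Set.univ : Set ℕ) = {n | x n = true}ᶜ := by
      ext n; simp [Set.mem_symmDiff]
    rw [Set.mem_preimage, memT, Set.mem_compl_iff, memT, setOf_flp, huniv,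
      Ultrafilter.compl_mem_iff_notMem]
  -- T is Borel, hence Baire measurable
  have hTc : AnalyticSet Tᶜ := hneg ▸ hT.preimage (flp_continuous _)
  have hTm : MeasurableSet T := hT.measurableSet_of_compl hTc
  obtain ⟨V, hVopen, hTV⟩ := hTm.baireMeasurableSet.residualEq_isOpen
  -- the symmetric difference of T and V is meagre
  have hmeag : IsMeagre (symmDiff T V) := by
    rw [IsMeagre]
    refine Filter.mem_of_superset hTV ?_
    intro x hx
    have hx' : (x ∈ T) ↔ (x ∈ V) := iff_of_eq hx
    simp only [Set.mem_compl_iff, Set.mem_symmDiff]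
    tauto
  rcases Set.eq_empty_or_nonempty V with hV | ⟨x0, hx0⟩
  · -- V empty: T meagre, Tᶜ meagre, contradiction
    have h1 : IsMeagre T := hmeag.mono (by rw [hV]; simp [Set.symmDiff_def])
    have h2 : IsMeagre Tᶜ := by rw [← hneg]; exact flp_meagre h1
    have : (∅ : Set (ℕ → Bool)) ∈ residual _ := by
      have := Filter.inter_mem h1 h2
      simpa using this
    exact absurd (dense_of_mem_residual this).nonempty (by simp)
  · -- V nonempty: find a cylinder C ⊆ V
    have hVx : V ∈ nhds x0 := hVopen.mem_nhds hx0
    rw [nhds_pi, Filter.mem_pi] at hVx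
    obtain ⟨I, hIfin, t, ht, htV⟩ := hVx
    have hx0t : ∀ i, x0 i ∈ t i := fun i => mem_of_mem_nhds (ht i)
    set C : Set (ℕ → Bool) := {y | ∀ i ∈ I, y i = x0 i} with hCdef
    have hCV : C ⊆ V := by
      intro y hy
      apply htV
      intro i hi
      rw [hy i hi]; exact hx0t i
    have hCopen : IsOpen C := by
      have : C = ⋂ i ∈ I, (fun y : ℕ → Bool => y i) ⁻¹' {x0 i} := by
        ext y; simp [hCdef]
      rw [this]
      exact hIfin.isOpen_biInter fun i _ =>
        (isOpen_discrete _).preimage (continuous_apply i)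
    have hx0C : x0 ∈ C := fun i _ => rfl
    -- C \ T is meagre
    have h1 : IsMeagre (C \ T) :=
      hmeag.mono fun y ⟨hyC, hyT⟩ => Set.mem_symmDiff.2 (Or.inr ⟨hCV hyC, hyT⟩)
    -- C ∩ T is meagre: flip all coords, then flip coords in I
    have h2 : IsMeagre (flp I ⁻¹' (flp Set.univ ⁻¹' (C \ T))) :=
      flp_meagre (flp_meagre h1)
    have hcomp : flp I ⁻¹' (flp Set.univ ⁻¹' (C \ T)) = C ∩ T := by
      have hpreC : flp I ⁻¹' (flp Set.univ ⁻¹' C) = C := by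
        ext y
        simp only [Set.mem_preimage, hCdef, Set.mem_setOf_eq, flp, Set.mem_univ, if_true]
        constructor
        · intro h i hi
          have := h i hi
          simp [hi] at this
          simpa using this
        · intro h i hi
          simp [hi, h i hi]
      have hpreT : flp I ⁻¹' (flp Set.univ ⁻¹' T) = Tᶜ := by
        rw [hneg, Set.preimage_compl, hfin I hIfin]
      rw [Set.preimage_diff, Set.preimage_diff, hpreC, hpreT, Set.diff_compl]
    rw [hcomp] at h2
    -- so C is meagre, but it is nonempty open: contradiction
    have hCm : (Cᶜ : Set (ℕ → Bool)) ∈ residual _ := by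
      have := Filter.inter_mem h1 h2
      refine Filter.mem_of_superset this ?_
      intro y hy
      simp only [Set.mem_inter_iff, Set.mem_compl_iff, Set.mem_diff] at hy ⊢
      tauto
    obtain ⟨y, hyC, hyCc⟩ := (dense_of_mem_residual hCm).inter_open_nonempty C hCopen ⟨x0, hx0C⟩
    exact hyCc hyC
end

section
/- βℕ contains no injective convergent sequence: if (x_n) is a sequence of ultrafilters in βℕ converging (in the usual topological sense) to a point p ∈ βℕ, then (x_n) is not injective. -/
open Set

noncomputable def gseq (x : ℕ → Ultrafilter ℕ) (p : Ultrafilter ℕ) (S : ℕ → Set ℕ) : ℕ → ℕ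
  | k => sInf {m | x m ≠ p ∧ ∀ i, i < k → gseq x p S i < m ∧ S (gseq x p S i) ∉ x m}

theorem no_injective_convergent_sequence_in_betaN
    (x : ℕ → Ultrafilter ℕ) (p : Ultrafilter ℕ)
    (hconv : ∀ V ∈ nhds p, ({n : ℕ | x n ∈ V})ᶜ.Finite) :
    ¬ Function.Injective x := by
  intro hinj
  -- choose separating sets
  have key : ∀ n, x n ≠ p → ∃ s : Set ℕ, s ∈ x n ∧ s ∉ p := by
    intro n hn
    by_contra h
    push_neg at h
    apply hn
    have hle : (p : Filter ℕ) ≤ (x n : Filter ℕ) := fun s hs => h s hs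
    exact (Ultrafilter.coe_le_coe.1 hle).symm
  have hSex : ∀ n, ∃ s : Set ℕ, x n ≠ p → (s ∈ x n ∧ s ∉ p) := by
    intro n
    by_cases hn : x n = p
    · exact ⟨∅, fun h => absurd hn h⟩
    · exact (key n hn).imp (fun s hs _ => hs)
  choose S hS using hSex
  -- convergence gives finiteness
  have hfin : ∀ n, x n ≠ p → {m | S n ∈ x m}.Finite := by
    intro n hn
    have hV : IsOpen {q : Ultrafilter ℕ | (S n)ᶜ ∈ q} := ultrafilter_isOpen_basic _
    have hpV : p ∈ {q : Ultrafilter ℕ | (S n)ᶜ ∈ q} :=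
      Ultrafilter.compl_mem_iff_notMem.2 (hS n hn).2
    have hf := hconv _ (hV.mem_nhds hpV)
    have : {m | S n ∈ x m} = {m | x m ∈ {q : Ultrafilter ℕ | (S n)ᶜ ∈ q}}ᶜ := by
      ext m
      simp [Ultrafilter.compl_mem_iff_notMem]
    rw [this]
    exact hf
  have hpfin : {m | x m = p}.Finite := by
    apply Set.Subsingleton.finite
    intro a ha b hb
    exact hinj (ha.trans hb.symm)
  set g := gseq x p S with hgdef
  -- key spec
  have gspec : ∀ k, x (g k) ≠ p ∧ ∀ i, i < k → g i < g k ∧ S (g i) ∉ x (g k) := by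
    intro k
    induction k using Nat.strong_induction_on with
    | _ k ih =>
      have hsub : {m | x m ≠ p ∧ ∀ i, i < k → g i < m ∧ S (g i) ∉ x m}ᶜ ⊆
          {m | x m = p} ∪ ⋃ i ∈ Set.Iio k, ({m | m ≤ g i} ∪ {m | S (g i) ∈ x m}) := by
        intro m hm
        by_cases hmp : x m = p
        · exact Or.inl hmp
        · have hne : ¬ ∀ i, i < k → g i < m ∧ S (g i) ∉ x m := fun hall => hm ⟨hmp, hall⟩
          obtain ⟨i, hi, hbad⟩ : ∃ i, i < k ∧ ¬(g i < m ∧ S (g i) ∉ x m) := by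
            by_contra hc
            push_neg at hc
            exact hne fun i hi => hc i hi
          refine Or.inr (mem_biUnion hi ?_)
          rcases not_and_or.1 hbad with h1 | h1
          · exact Or.inl (not_lt.1 h1)
          · exact Or.inr (not_not.1 h1)
      have hcfin : ({m | x m ≠ p ∧ ∀ i, i < k → g i < m ∧ S (g i) ∉ x m}ᶜ).Finite := by
        apply Set.Finite.subset _ hsub
        apply hpfin.union
        apply Set.Finite.biUnion (Set.finite_Iio k)
        intro i hi
        exact (Set.finite_Iic (g i)).union (hfin (g i) (ih i hi).1)
      have hinf : {m | x m ≠ p ∧ ∀ i, i < k → g i < m ∧ S (g i) ∉ x m}.Infinite := by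
        have := hcfin.infinite_compl
        rwa [compl_compl] at this
      have hmem : g k ∈ {m | x m ≠ p ∧ ∀ i, i < k → g i < m ∧ S (g i) ∉ x m} := by
        rw [hgdef, gseq]
        exact Nat.sInf_mem hinf.nonempty
      exact hmem
  have hgmono : StrictMono g := strictMono_nat_of_lt_succ (fun n => ((gspec (n+1)).2 n (Nat.lt_succ_self n)).1)
  have hgmono' : ∀ i k, i < k → g i < g k := fun i k h => hgmono h
  -- the disjointified sets
  set C : ℕ → Set ℕ := fun k => S (g k) \ ⋃ i ∈ Set.Iio k, S (g i) with hCdef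
  have hC1 : ∀ k, C k ∈ x (g k) := by
    intro k
    have hnot : (⋃ i ∈ Set.Iio k, S (g i)) ∉ x (g k) := by
      rw [Ultrafilter.finite_biUnion_mem_iff (Set.finite_Iio k)]
      rintro ⟨i, hi, hmem⟩
      exact ((gspec k).2 i hi).2 hmem
    exact Filter.diff_mem (hS (g k) (gspec k).1).1 (Ultrafilter.compl_mem_iff_notMem.2 hnot)
  have hCS : ∀ k, C k ⊆ S (g k) := fun k => Set.diff_subset
  have hdisj : ∀ j k, j < k → ∀ a, a ∈ C k → a ∉ C j := by
    intro j k hjk a hak haj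
    exact hak.2 (mem_biUnion hjk (hCS j haj))
  set A : Set ℕ := ⋃ k, C (2 * k) with hAdef
  have hA1 : ∀ k, A ∈ x (g (2 * k)) :=
    fun k => Filter.mem_of_superset (hC1 (2 * k)) (Set.subset_iUnion (fun k => C (2 * k)) k)
  have hA2 : ∀ k, Aᶜ ∈ x (g (2 * k + 1)) := by
    intro k
    apply Filter.mem_of_superset (hC1 (2 * k + 1))
    intro a ha haA
    obtain ⟨j, hj⟩ := Set.mem_iUnion.1 haA
    rcases lt_or_gt_of_ne (show 2 * j ≠ 2 * k + 1 by omega) with h | h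
    · exact hdisj (2 * j) (2 * k + 1) h a ha hj
    · exact hdisj (2 * k + 1) (2 * j) h a hj ha
  by_cases hAp : A ∈ p
  · have hV := hconv {q : Ultrafilter ℕ | A ∈ q} ((ultrafilter_isOpen_basic A).mem_nhds hAp)
    have : {n | x n ∈ {q : Ultrafilter ℕ | A ∈ q}}ᶜ.Infinite := by
      apply Set.infinite_of_injective_forall_mem
        (f := fun k => g (2 * k + 1))
        (fun a b hab => by
          have := hgmono.injective hab; omega)
      intro k
      simp only [mem_compl_iff, mem_setOf_eq]
      exact Ultrafilter.compl_mem_iff_notMem.1 (hA2 k)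
    exact this hV
  · have hApc : Aᶜ ∈ p := Ultrafilter.compl_mem_iff_notMem.2 hAp
    have hV := hconv {q : Ultrafilter ℕ | Aᶜ ∈ q} ((ultrafilter_isOpen_basic Aᶜ).mem_nhds hApc)
    have : {n | x n ∈ {q : Ultrafilter ℕ | Aᶜ ∈ q}}ᶜ.Infinite := by
      apply Set.infinite_of_injective_forall_mem
        (f := fun k => g (2 * k))
        (fun a b hab => by
          have := hgmono.injective hab; omega)
      intro k
      simp only [mem_compl_iff, mem_setOf_eq]
      intro hmem
      exact (Ultrafilter.compl_mem_iff_notMem.1 hmem) (hA1 k)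
    exact this hV
end

section
/- In βℕ, basic clopen sets separate points from countable sets: if p ∈ βℕ and (x_n) is an injective sequence in βℕ with x_n ≠ p for all n, then there exist sets C_n ⊆ ℕ (n < ω) such that the Ĉ_n = {q ∈ βℕ : C_n ∈ q} are pairwise disjoint, p ∉ Ĉ_n for all n, and every x_k belongs to some Ĉ_n. -/
open Classical in
noncomputable def Aset (p q : Ultrafilter ℕ) : Set ℕ :=
  if h : ∃ A, A ∈ q ∧ A ∉ p then h.choose else Set.univ

lemma Aset_spec {p q : Ultrafilter ℕ} (h : q ≠ p) : Aset p q ∈ q ∧ Aset p q ∉ p := by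
  have hex : ∃ A, A ∈ q ∧ A ∉ p := by
    by_contra hc
    push_neg at hc
    apply h
    apply Ultrafilter.coe_injective
    apply Filter.ext
    intro A
    constructor
    · exact hc A
    · intro hA
      by_contra hA'
      have := hc Aᶜ ((Ultrafilter.compl_mem_iff_notMem).2 hA')
      exact (Ultrafilter.compl_mem_iff_notMem).1 this hA
  rw [Aset, dif_pos hex]
  exact hex.choose_spec

open Classical in
noncomputable def stepC (p : Ultrafilter ℕ) (x : ℕ → Ultrafilter ℕ) (n : ℕ)
    (prev : List (Set ℕ)) : Set ℕ :=
  if ∃ S ∈ prev, S ∈ x n then ∅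
  else Aset p (x n) ∩ {a | ∀ S ∈ prev, a ∉ S}

noncomputable def listC (p : Ultrafilter ℕ) (x : ℕ → Ultrafilter ℕ) : ℕ → List (Set ℕ)
  | 0 => []
  | n + 1 => listC p x n ++ [stepC p x n (listC p x n)]

lemma mem_listC (p : Ultrafilter ℕ) (x : ℕ → Ultrafilter ℕ) :
    ∀ n S, S ∈ listC p x n ↔ ∃ m < n, S = stepC p x m (listC p x m) := by
  intro n
  induction n with
  | zero => simp [listC]
  | succ n ih =>
    intro S
    simp only [listC, List.mem_append, List.mem_singleton, ih]
    constructor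
    · rintro (⟨m, hm, rfl⟩ | rfl)
      · exact ⟨m, by omega, rfl⟩
      · exact ⟨n, by omega, rfl⟩
    · rintro ⟨m, hm, rfl⟩
      rcases Nat.lt_succ_iff_lt_or_eq.1 hm with hm | rfl
      · exact Or.inl ⟨m, hm, rfl⟩
      · exact Or.inr rfl

lemma list_compl_mem (u : Ultrafilter ℕ) :
    ∀ (l : List (Set ℕ)), (∀ S ∈ l, S ∉ u) → {a | ∀ S ∈ l, a ∉ S} ∈ u := by
  intro l
  induction l with
  | nil => intro _; exact Filter.univ_mem' (fun a => by simp)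
  | cons S t ih =>
    intro h
    have h1 : Sᶜ ∈ u := Ultrafilter.compl_mem_iff_notMem.2 (h S (by simp))
    have h2 := ih (fun T hT => h T (by simp [hT]))
    apply Filter.mem_of_superset (Filter.inter_mem h1 h2)
    rintro a ⟨ha1, ha2⟩ T hT
    rcases List.mem_cons.1 hT with rfl | hT
    · exact ha1
    · exact ha2 T hT

theorem separate_point_from_injective_sequence
    (p : Ultrafilter ℕ) (x : ℕ → Ultrafilter ℕ)
    (hinj : Function.Injective x) (hxp : ∀ n, x n ≠ p) :
    ∃ C : ℕ → Set ℕ,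
      Pairwise (fun n m => Disjoint {q : Ultrafilter ℕ | C n ∈ q} {q : Ultrafilter ℕ | C m ∈ q}) ∧
      (∀ n, C n ∉ p) ∧
      (∀ k, ∃ n, C n ∈ x k) := by
  classical
  set C : ℕ → Set ℕ := fun n => stepC p x n (listC p x n) with hC
  refine ⟨C, ?_, ?_, ?_⟩
  · -- pairwise disjoint hats
    have key : ∀ m n : ℕ, m < n → Disjoint (C n) (C m) := by
      intro m n hmn
      by_cases h : ∃ S ∈ listC p x n, S ∈ x n
      · simp only [hC, stepC, if_pos h]
        exact disjoint_bot_left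
      · simp only [hC, stepC, if_neg h]
        rw [Set.disjoint_left]
        rintro a ⟨-, ha⟩ hmem
        exact ha _ ((mem_listC p x n _).2 ⟨m, hmn, rfl⟩) hmem
    have hats : ∀ m n : ℕ, Disjoint (C n) (C m) →
        Disjoint {q : Ultrafilter ℕ | C n ∈ q} {q : Ultrafilter ℕ | C m ∈ q} := by
      intro m n hd
      rw [Set.disjoint_left]
      intro q hq1 hq2
      have : C n ∩ C m ∈ q := Filter.inter_mem hq1 hq2
      rw [Set.disjoint_iff_inter_eq_empty.1 hd] at this
      exact q.empty_notMem this
    intro m n hne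
    rcases lt_or_gt_of_ne hne with h | h
    · exact (hats m n (key m n h)).symm
    · exact hats n m (key n m h)
  · -- C n ∉ p
    intro n
    by_cases h : ∃ S ∈ listC p x n, S ∈ x n
    · simp only [hC, stepC, if_pos h]
      exact p.empty_notMem
    · simp only [hC, stepC, if_neg h]
      intro hmem
      exact (Aset_spec (hxp n)).2 (Filter.mem_of_superset hmem Set.inter_subset_left)
  · -- covering
    intro k
    by_cases h : ∃ S ∈ listC p x k, S ∈ x k
    · obtain ⟨S, hS, hSx⟩ := h
      obtain ⟨m, hm, rfl⟩ := (mem_listC p x k S).1 hS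
      exact ⟨m, hSx⟩
    · refine ⟨k, ?_⟩
      simp only [hC, stepC, if_neg h]
      push_neg at h
      exact Filter.inter_mem (Aset_spec (hxp k)).1 (list_compl_mem (x k) _ h)
end
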